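/- Let T̃_m denote the number of typed search walks of length m. Then T̃_1 = 1, and for every m ≥ 2, T̃_m = Σ_{(a,b)} T̃_a · T̃_b + 4 · Σ_{k ≥ 3} Σ_{(m_1,…,m_k)} T̃_{m_1} · ⋯ · T̃_{m_k}, where the first sum ranges over all pairs (a,b) of positive integers with a + b = m − 1, and the inner sum in the second term ranges over all compositions of m − 1 into k positive parts (only finitely many summands are nonzero). -/

import Mathlib

/-- A search walk: a finite sequence of nonzero integers each at most `1`,
all of whose partial sums are at least `1`, and whose total sum is `1`. -/
def IsSearchWalk (D : List ℤ) : Prop :=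
  (∀ d ∈ D, d ≠ 0 ∧ d ≤ 1) ∧
  (∀ k, 1 ≤ k → k ≤ D.length → 1 ≤ (D.take k).sum) ∧
  D.sum = 1

/-- `Tt m` is the number of typed search walks of length `m`: pairs of a search
walk `D` of length `m` together with an assignment of a label in `{1,2,3,4}`
(here modelled as `Fin 4`) to each entry of `D` that is at most `-2` (the
assignment is recorded as the list of labels of those entries in order). -/
noncomputable def Tt (m : ℕ) : ℕ :=
  Nat.card {p : List ℤ × List (Fin 4) //
    p.1.length = m ∧ IsSearchWalk p.1 ∧
    p.2.length = (p.1.filter fun d => decide (d ≤ -2)).length}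

namespace TSW



/-- count of entries `≤ -2`. -/
def cnt (D : List ℤ) : ℕ := (D.filter fun d => decide (d ≤ -2)).length

lemma cnt_append (A B : List ℤ) : cnt (A ++ B) = cnt A + cnt B := by
  simp [cnt, List.filter_append]

lemma cnt_flatten (L : List (List ℤ)) : cnt L.flatten = (L.map cnt).sum := by
  induction L with
  | nil => simp [cnt]
  | cons W L ih => simp [List.flatten_cons, cnt_append, ih]

lemma prod_map_pow (L : List (List ℤ)) :
    (L.map fun W => 4 ^ cnt W).prod = 4 ^ ((L.map cnt).sum) := by
  induction L with
  | nil => simp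
  | cons W L ih => simp [ih, pow_add]

lemma sum_take_le (E : List ℤ) (h1 : ∀ d ∈ E, d ≤ 1) (k : ℕ) :
    (E.take k).sum ≤ (k : ℤ) := by
  calc (E.take k).sum ≤ (E.take k).length • (1 : ℤ) :=
        List.sum_le_card_nsmul _ _ (fun x hx => h1 x (List.mem_of_mem_take hx))
    _ ≤ (k : ℤ) := by
        simp only [nsmul_eq_mul, mul_one]
        exact_mod_cast Nat.cast_le.mpr (by simpa using E.length_take k ▸ min_le_left _ _)

lemma sum_take_succ_le (E : List ℤ) (h1 : ∀ d ∈ E, d ≤ 1) (l : ℕ) :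
    (E.take (l + 1)).sum ≤ (E.take l).sum + 1 := by
  rcases lt_or_ge l E.length with h | h
  · rw [List.sum_take_succ _ _ h]
    have : E[l] ≤ 1 := h1 _ (List.getElem_mem h)
    omega
  · rw [List.take_of_length_le h, List.take_of_length_le (le_trans h (Nat.le_succ l))]
    omega

/-- Intermediate value theorem for walks with up-steps at most 1. -/
lemma ivt (E : List ℤ) (h1 : ∀ d ∈ E, d ≤ 1) (v : ℤ) :
    ∀ l i, i ≤ l → (E.take i).sum < v → v ≤ (E.take l).sum →
      ∃ j, i < j ∧ j ≤ l ∧ (E.take j).sum = v := by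
  intro l
  induction l with
  | zero => intro i hi h2 h3; interval_cases i; omega
  | succ l ih =>
    intro i hi h2 h3
    rcases Nat.eq_or_lt_of_le hi with rfl | hi'
    · omega
    have hi'' : i ≤ l := Nat.lt_succ_iff.mp hi'
    rcases le_or_gt v ((E.take l).sum) with hv | hv
    · obtain ⟨j, hj1, hj2, hj3⟩ := ih i hi'' h2 hv
      exact ⟨j, hj1, Nat.le_succ_of_le hj2, hj3⟩
    · refine ⟨l + 1, hi', le_refl _, ?_⟩
      have := sum_take_succ_le E h1 l
      omega

/-- The cut-point property: `k` is a last visit to level `s`. -/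
def Q (E : List ℤ) (s : ℕ) (k : ℕ) : Prop :=
  k ≤ E.length ∧ (E.take k).sum = (s : ℤ) ∧
    ∀ i, k < i → i ≤ E.length → (s : ℤ) + 1 ≤ (E.take i).sum

lemma Q_unique {E s k k'} (h : Q E s k) (h' : Q E s k') : k = k' := by
  obtain ⟨hle, hsum, haft⟩ := h
  obtain ⟨hle', hsum', haft'⟩ := h'
  by_contra hne
  rcases Nat.lt_or_ge k k' with hlt | hge
  · have := haft k' hlt hle'; omega
  · have := haft' k (lt_of_le_of_ne hge (Ne.symm hne)) hle; omega

lemma Q_exists (E : List ℤ) (s : ℕ) (hs : 1 ≤ s)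
    (h1 : ∀ d ∈ E, d ≠ 0 ∧ d ≤ 1)
    (h2 : ∀ k, 1 ≤ k → k ≤ E.length → 1 ≤ (E.take k).sum)
    (h3 : E.sum = (s : ℤ) + 1) : ∃ k, Q E s k := by
  have h1' : ∀ d ∈ E, d ≤ 1 := fun d hd => (h1 d hd).2
  have hEne : (E.take E.length).sum = (s : ℤ) + 1 := by
    rw [List.take_of_length_le (le_refl _)]; exact h3
  obtain ⟨k0, hk01, hk02, hk03⟩ := ivt E h1' (s : ℤ) E.length 0 (Nat.zero_le _)
    (by simp; exact_mod_cast hs) (by rw [hEne]; omega)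
  -- take the maximum such k
  set T : Finset ℕ := (Finset.range (E.length + 1)).filter
    (fun k => (E.take k).sum = (s : ℤ)) with hT
  have hne : T.Nonempty := ⟨k0, by simp [hT, Nat.lt_succ_iff, hk02, hk03]⟩
  set k := T.max' hne with hk
  have hkmem : k ∈ T := T.max'_mem hne
  simp only [hT, Finset.mem_filter, Finset.mem_range, Nat.lt_succ_iff] at hkmem
  refine ⟨k, hkmem.1, hkmem.2, ?_⟩
  intro i hki hile
  by_contra hcon
  push_neg at hcon
  have hi1 : 1 ≤ (E.take i).sum := h2 i (by omega) hile
  have hine : (E.take i).sum ≠ (s : ℤ) := by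
    intro hh
    have : i ≤ k := T.le_max' i (by simp [hT, Nat.lt_succ_iff, hile, hh])
    omega
  have hilt : (E.take i).sum < (s : ℤ) := by omega
  obtain ⟨j, hj1, hj2, hj3⟩ := ivt E h1' (s : ℤ) E.length i hile hilt (by rw [hEne]; omega)
  have : j ≤ k := T.le_max' j (by simp [hT, Nat.lt_succ_iff, hj2, hj3])
  omega

/-- Any decomposition of `E` into search walks `L₁ ++ [W]` has cut point satisfying `Q`. -/
lemma Q_of_decomp (L₁ : List (List ℤ)) (W : List ℤ) (hW : IsSearchWalk W)
    (hL₁ : ∀ V ∈ L₁, IsSearchWalk V) :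
    Q (L₁.flatten ++ W) L₁.length L₁.flatten.length := by
  set E₁ := L₁.flatten with hE₁
  have hsum : E₁.sum = (L₁.length : ℤ) := by
    rw [hE₁, List.sum_flatten]
    rw [List.sum_eq_card_nsmul (L₁.map List.sum) 1 ?_]
    · simp
    · intro x hx
      obtain ⟨V, hV, rfl⟩ := List.mem_map.mp hx
      exact (hL₁ V hV).2.2
  refine ⟨by simp, ?_, ?_⟩
  · rw [List.take_append_of_le_length (le_refl _), List.take_of_length_le (le_refl _), hsum]
  · intro i hi hile
    rw [List.take_append, List.take_of_length_le (le_of_lt hi),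
      List.sum_append, hsum]
    have h1 : 1 ≤ (W.take (i - E₁.length)).sum := by
      apply hW.2.1
      · omega
      · simp only [List.length_append] at hile; omega
    omega

theorem decomp_exists_unique : ∀ s : ℕ, 1 ≤ s → ∀ E : List ℤ,
    (∀ d ∈ E, d ≠ 0 ∧ d ≤ 1) →
    (∀ k, 1 ≤ k → k ≤ E.length → 1 ≤ (E.take k).sum) →
    E.sum = (s : ℤ) →
    ∃ L : List (List ℤ), ((∀ W ∈ L, IsSearchWalk W) ∧ L.length = s ∧ L.flatten = E) ∧
      ∀ L' : List (List ℤ),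
        ((∀ W ∈ L', IsSearchWalk W) ∧ L'.length = s ∧ L'.flatten = E) → L' = L := by
  intro s hs
  induction s, hs using Nat.le_induction with
  | base =>
    intro E h1 h2 h3
    refine ⟨[E], ⟨?_, rfl, by simp⟩, ?_⟩
    · intro W hW; simp at hW; subst hW; exact ⟨h1, h2, by exact_mod_cast h3⟩
    · rintro L' ⟨hL1, hL2, hL3⟩
      match L', hL2 with
      | [W], _ => simp at hL3; simp [hL3]
  | succ s hs ih =>
    intro E h1 h2 h3
    obtain ⟨k, hQ⟩ := Q_exists E s hs h1 h2 (by push_cast at h3 ⊢; omega)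
    obtain ⟨hkle, hksum, hkafter⟩ := hQ
    have hklt : k < E.length := by
      rcases Nat.eq_or_lt_of_le hkle with rfl | h
      · exfalso; rw [List.take_of_length_le (le_refl _)] at hksum
        push_cast at h3; omega
      · exact h
    -- the prefix
    set E₁ := E.take k with hE₁def
    have hE₁len : E₁.length = k := by simp [hE₁def]; omega
    have htt : ∀ j ≤ k, E₁.take j = E.take j := by
      intro j hj; rw [hE₁def, List.take_take, min_eq_left hj]
    have hE₁1 : ∀ d ∈ E₁, d ≠ 0 ∧ d ≤ 1 := fun d hd => h1 d (List.mem_of_mem_take hd)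
    have hE₁2 : ∀ j, 1 ≤ j → j ≤ E₁.length → 1 ≤ (E₁.take j).sum := by
      intro j hj1 hj2; rw [htt j (by omega)]; exact h2 j hj1 (by omega)
    have hE₁3 : E₁.sum = (s : ℤ) := by
      rw [← List.take_of_length_le (le_refl E₁.length), htt E₁.length (by omega), hE₁len]
      exact hksum
    obtain ⟨L₁, ⟨hL₁w, hL₁len, hL₁fl⟩, hL₁uniq⟩ := ih E₁ hE₁1 hE₁2 hE₁3
    -- the last walk
    set W := E.drop k with hWdef
    have hWlen : W.length = E.length - k := by simp [hWdef]
    have hsplit : E₁ ++ W = E := List.take_append_drop k E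
    have hWtake : ∀ j, (W.take j).sum = (E.take (k + j)).sum - (s : ℤ) := by
      intro j
      have : E.take (k + j) = E₁ ++ W.take j := by
        conv_lhs => rw [← hsplit]
        rw [List.take_append, hE₁len,
          List.take_of_length_le (by rw [hE₁len]; omega)]
        congr 2
        omega
      rw [this, List.sum_append, hE₁3]
      ring
    have hWwalk : IsSearchWalk W := by
      refine ⟨fun d hd => h1 d (List.mem_of_mem_drop hd), ?_, ?_⟩
      · intro j hj1 hj2
        rw [hWtake j]
        have := hkafter (k + j) (by omega) (by omega)
        omega
      · have : W.sum = (W.take W.length).sum := by rw [List.take_of_length_le (le_refl _)]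
        rw [this, hWtake, hWlen]
        have h4 : k + (E.length - k) = E.length := by omega
        rw [h4, List.take_of_length_le (le_refl _)]
        push_cast at h3 ⊢; omega
    refine ⟨L₁ ++ [W], ⟨?_, by simp [hL₁len], by simp [hL₁fl, hsplit]⟩, ?_⟩
    · intro V hV
      rcases List.mem_append.mp hV with h | h
      · exact hL₁w V h
      · simp at h; subst h; exact hWwalk
    · rintro L' ⟨hL'w, hL'len, hL'fl⟩
      rcases L'.eq_nil_or_concat' with rfl | ⟨L₁', W', rfl⟩
      · simp at hL'len
      have hL₁'len : L₁'.length = s := by simp at hL'len; omega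
      have hL₁'w : ∀ V ∈ L₁', IsSearchWalk V := fun V hV => hL'w V (by simp [hV])
      have hW'w : IsSearchWalk W' := hL'w W' (by simp)
      have hfl' : L₁'.flatten ++ W' = E := by
        rw [← hL'fl]; simp
      have hQ' : Q E s L₁'.flatten.length := by
        have := Q_of_decomp L₁' W' hW'w hL₁'w
        rw [hfl', hL₁'len] at this; exact this
      have hkk : L₁'.flatten.length = k := Q_unique hQ' ⟨hkle, hksum, hkafter⟩
      have hE₁' : L₁'.flatten = E₁ := by
        rw [hE₁def, ← hfl', List.take_append_of_le_length (by omega),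
          List.take_of_length_le (by omega)]
      have hW' : W' = W := by
        rw [hWdef, ← hfl', List.drop_append,
          List.drop_of_length_le (by rw [hkk]), hkk]
        simp
      rw [hL₁uniq L₁' ⟨hL₁'w, hL₁'len, hE₁'⟩, hW']

lemma swFinite (m : ℕ) : {D : List ℤ | D.length = m ∧ IsSearchWalk D}.Finite := by
  haveI := (Set.finite_Icc (2 - (m : ℤ)) 1).to_subtype
  apply Set.Finite.subset ((List.finite_length_eq ↥(Set.Icc (2 - (m : ℤ)) 1) m).image
    (fun l => l.map Subtype.val))
  rintro D ⟨hlen, h1, h2, _⟩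
  have hbd : ∀ d ∈ D, d ∈ Set.Icc (2 - (m : ℤ)) 1 := by
    intro d hd
    obtain ⟨i, hi, rfl⟩ := List.mem_iff_getElem.mp hd
    have e1 := List.sum_take_succ D i hi
    have e2 : 1 ≤ (D.take (i + 1)).sum := h2 (i + 1) (by omega) (by omega)
    have e3 : (D.take i).sum ≤ (i : ℤ) := sum_take_le D (fun d hd => (h1 d hd).2) i
    have e4 : (i : ℤ) < (m : ℤ) := by exact_mod_cast hlen ▸ hi
    exact ⟨by omega, (h1 _ hd).2⟩
  refine ⟨D.attach.map (fun x => ⟨x.1, hbd x.1 x.2⟩), ?_, ?_⟩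
  · simpa using hlen
  · simp [List.map_map]

noncomputable def Fm (m : ℕ) : Finset (List ℤ) := (swFinite m).toFinset

lemma mem_Fm {m D} : D ∈ Fm m ↔ D.length = m ∧ IsSearchWalk D := by
  simp [Fm, Set.Finite.mem_toFinset]

/-- equivalence splitting a typed walk into walk + labels vector -/
def splitEquiv (m : ℕ) :
    {p : List ℤ × List (Fin 4) //
      p.1.length = m ∧ IsSearchWalk p.1 ∧
      p.2.length = (p.1.filter fun d => decide (d ≤ -2)).length} ≃
    Σ D : {D : List ℤ // D.length = m ∧ IsSearchWalk D},
      List.Vector (Fin 4) (cnt D.1) where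
  toFun p := ⟨⟨p.1.1, p.2.1, p.2.2.1⟩, ⟨p.1.2, p.2.2.2⟩⟩
  invFun x := ⟨(x.1.1, x.2.1), x.1.2.1, x.1.2.2, x.2.2⟩
  left_inv p := rfl
  right_inv x := rfl

lemma Tt_eq (m : ℕ) : Tt m = ∑ D ∈ Fm m, 4 ^ cnt D := by
  haveI : Fintype {D : List ℤ // D.length = m ∧ IsSearchWalk D} := (swFinite m).fintype
  rw [Tt, Nat.card_congr (splitEquiv m), Nat.card_eq_fintype_card, Fintype.card_sigma]
  rw [Finset.sum_subtype (Fm m) (fun x => mem_Fm) (fun D => (4:ℕ) ^ cnt D)]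
  apply Finset.sum_congr rfl
  intro D _
  rw [card_vector]
  simp

lemma Tt_one : Tt 1 = 1 := by
  have hFm : Fm 1 = {[(1 : ℤ)]} := by
    ext D
    rw [mem_Fm, Finset.mem_singleton]
    constructor
    · rintro ⟨hlen, h1, h2, h3⟩
      obtain ⟨a, rfl⟩ := List.length_eq_one_iff.mp hlen
      simp at h3; subst h3; rfl
    · rintro rfl
      refine ⟨rfl, fun d hd => ?_, fun k hk1 hk2 => ?_, by simp⟩
      · simp at hd; subst hd; exact ⟨one_ne_zero, le_refl _⟩
      · have : k = 1 := by simp at hk2; omega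
        subst this; simp
  rw [Tt_eq, hFm]
  simp [cnt]

lemma flatten_sum {L : List (List ℤ)} (h : ∀ W ∈ L, IsSearchWalk W) :
    L.flatten.sum = (L.length : ℤ) := by
  rw [List.sum_flatten, List.sum_eq_card_nsmul (L.map List.sum) 1 ?_]
  · simp
  · intro x hx
    obtain ⟨V, hV, rfl⟩ := List.mem_map.mp hx
    exact (h V hV).2.2

lemma flatten_partial {L : List (List ℤ)} (h : ∀ W ∈ L, IsSearchWalk W) :
    ∀ k, 1 ≤ k → k ≤ L.flatten.length → 1 ≤ (L.flatten.take k).sum := by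
  induction L with
  | nil => intro k h1 h2; simp at h2; omega
  | cons W L ih =>
    intro k h1 h2
    rw [List.flatten_cons, List.take_append, List.sum_append]
    rcases le_or_gt k W.length with hk | hk
    · have : k - W.length = 0 := by omega
      rw [this]
      simp only [List.take_zero, List.sum_nil, add_zero]
      exact (h W (by simp)).2.1 k h1 hk
    · rw [List.take_of_length_le (by omega), (h W (by simp)).2.2]
      have : 1 ≤ (L.flatten.take (k - W.length)).sum := by
        apply ih (fun V hV => h V (by simp [hV]))
        · omega
        · simp only [List.flatten_cons, List.length_append] at h2; omega
      omega

noncomputable def G : List ℕ → Finset (List (List ℤ))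
  | [] => {[]}
  | b :: bs => ((Fm b) ×ˢ (G bs)).image fun p => p.1 :: p.2

lemma mem_G : ∀ {bs : List ℕ} {L : List (List ℤ)},
    L ∈ G bs ↔ (∀ W ∈ L, IsSearchWalk W) ∧ L.map List.length = bs := by
  intro bs
  induction bs with
  | nil =>
    intro L
    simp only [G, Finset.mem_singleton]
    constructor
    · rintro rfl; simp
    · rintro ⟨_, hmap⟩; simpa using List.map_eq_nil_iff.mp hmap
  | cons b bs ih =>
    intro L
    simp only [G, Finset.mem_image, Finset.mem_product]
    constructor
    · rintro ⟨⟨D, L'⟩, ⟨hD, hL'⟩, rfl⟩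
      obtain ⟨hw, hmap⟩ := ih.mp hL'
      obtain ⟨hlen, hwalk⟩ := mem_Fm.mp hD
      refine ⟨?_, by simp [hmap, hlen]⟩
      intro W hW
      rcases List.mem_cons.mp hW with rfl | hW
      · exact hwalk
      · exact hw W hW
    · rintro ⟨hw, hmap⟩
      cases L with
      | nil => simp at hmap
      | cons W L' =>
        simp only [List.map_cons, List.cons.injEq] at hmap
        exact ⟨(W, L'), ⟨mem_Fm.mpr ⟨hmap.1, hw W (by simp)⟩,
          ih.mpr ⟨fun V hV => hw V (by simp [hV]), hmap.2⟩⟩, rfl⟩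

lemma sum_G : ∀ bs : List ℕ,
    ∑ L ∈ G bs, (L.map fun W => (4:ℕ) ^ cnt W).prod = (bs.map Tt).prod := by
  intro bs
  induction bs with
  | nil => simp [G]
  | cons b bs ih =>
    rw [G, Finset.sum_image (by rintro ⟨D, L⟩ _ ⟨D', L'⟩ _ h; simpa using h)]
    rw [Finset.sum_product]
    simp only [List.map_cons, List.prod_cons]
    rw [← Finset.sum_mul_sum, ih, ← Tt_eq]

/-- weight of a composition -/
def w {n : ℕ} (c : Composition n) : ℕ :=
  if c.length = 2 then 1 else if 3 ≤ c.length then 4 else 0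

end TSW

open TSW

/-- `Tt 1 = 1`, and for `m ≥ 2`, `Tt m` equals the sum over all pairs `(a, b)`
of positive integers with `a + b = m - 1` of `Tt a * Tt b`, plus `4` times the
sum over all `k ≥ 3` and all compositions `(m₁, …, m_k)` of `m - 1` into `k`
positive parts of the products `Tt m₁ ⋯ Tt m_k`. -/
theorem typedSearchWalk_count_recurrence :
    Tt 1 = 1 ∧ ∀ m, 2 ≤ m →
      Tt m = (∑ c : Composition (m - 1),
          if c.length = 2 then (c.blocks.map Tt).prod else 0)
        + 4 * ∑ c : Composition (m - 1),
            if 3 ≤ c.length then (c.blocks.map Tt).prod else 0 := by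
  refine ⟨Tt_one, ?_⟩
  intro m hm
  set n := m - 1 with hn
  have hm1 : m = n + 1 := by omega
  have hn1 : 1 ≤ n := by omega
  -- Step A : RHS as a single weighted sum
  have stepA : ((∑ c : Composition n,
        if c.length = 2 then (c.blocks.map Tt).prod else 0)
      + 4 * ∑ c : Composition n,
          (if 3 ≤ c.length then (c.blocks.map Tt).prod else 0))
      = ∑ c : Composition n, w c * (c.blocks.map Tt).prod := by
    rw [Finset.mul_sum, ← Finset.sum_add_distrib]
    apply Finset.sum_congr rfl
    intro c _
    unfold n
    simp only [w]
    split_ifs with h1 h2 <;> omega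
  rw [stepA]
  -- Step B/C : expand products and collect into a sigma sum
  have stepB : ∑ c : Composition n, w c * (c.blocks.map Tt).prod
      = ∑ x ∈ (Finset.univ : Finset (Composition n)).sigma (fun c => G c.blocks),
          w x.1 * (x.2.map fun W => (4:ℕ) ^ cnt W).prod := by
    rw [show (∑ c : Composition n, w c * (c.blocks.map Tt).prod)
        = ∑ c : Composition n, ∑ L ∈ G c.blocks,
            w c * (L.map fun W => (4:ℕ) ^ cnt W).prod from
      Finset.sum_congr rfl (fun c _ => by rw [← Finset.mul_sum, sum_G])]
    exact Finset.sum_sigma' _ _ _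
  rw [stepB]
  -- Step D : restrict to compositions of length ≥ 2
  have hside : ∀ x ∈ (Finset.univ : Finset (Composition n)).sigma (fun c => G c.blocks),
      w x.1 * (x.2.map fun W => (4:ℕ) ^ cnt W).prod ≠ 0 → 2 ≤ x.1.length := by
    rintro ⟨c, L⟩ _ hne
    dsimp only at hne ⊢
    by_contra hcon
    apply hne
    have : w c = 0 := by
      simp only [w]
      rw [if_neg (by omega), if_neg (by omega)]
    rw [this, zero_mul]
  rw [← Finset.sum_filter_of_ne hside]
  -- Step E : bijection with search walks of length m
  rw [Tt_eq m]
  refine (Finset.sum_bij (fun x _ => x.2.flatten ++ [1 - (x.1.length : ℤ)]) ?_ ?_ ?_ ?_).symm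
  · -- maps into Fm m
    rintro ⟨c, L⟩ hx
    dsimp only
    simp only [Finset.mem_filter, Finset.mem_sigma, Finset.mem_univ, true_and] at hx
    obtain ⟨hG, hlen2⟩ := hx
    obtain ⟨hw, hmap⟩ := mem_G.mp hG
    have hLlen : L.length = c.length := by
      rw [Composition.length, ← hmap, List.length_map]
    have hflatlen : L.flatten.length = n := by
      rw [List.length_flatten, hmap, c.blocks_sum]
    have hflatsum : L.flatten.sum = (c.length : ℤ) := by
      rw [flatten_sum hw, hLlen]
    have hclen2 : (2 : ℤ) ≤ (c.length : ℤ) := by exact_mod_cast hlen2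
    rw [mem_Fm]
    constructor
    · simp [hflatlen, hm1]
    refine ⟨?_, ?_, ?_⟩
    · intro d hd
      rcases List.mem_append.mp hd with h | h
      · obtain ⟨V, hV, hdV⟩ := List.mem_flatten.mp h
        exact (hw V hV).1 d hdV
      · simp only [List.mem_singleton] at h
        subst h
        constructor <;> omega
    · intro k hk1 hk2
      simp only [List.length_append, List.length_singleton, hflatlen] at hk2
      rcases le_or_gt k n with hk | hk
      · rw [List.take_append_of_le_length (by omega)]
        exact flatten_partial hw k hk1 (by omega)
      · have hkeq : k = n + 1 := by omega
        rw [List.take_of_length_le (by simp [hflatlen]; omega), List.sum_append,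
          hflatsum]
        simp
    · rw [List.sum_append, hflatsum]; simp
  · -- injective
    rintro ⟨c, L⟩ h1 ⟨c', L'⟩ h2 heq
    dsimp only at heq
    simp only [Finset.mem_filter, Finset.mem_sigma, Finset.mem_univ, true_and] at h1 h2
    obtain ⟨hG, hlen2⟩ := h1
    obtain ⟨hG', hlen2'⟩ := h2
    obtain ⟨hw, hmap⟩ := mem_G.mp hG
    obtain ⟨hw', hmap'⟩ := mem_G.mp hG'
    obtain ⟨hfl, hlast⟩ := List.append_inj' heq (by simp)
    have hcc : c.length = c'.length := by
      simp only [List.cons.injEq, and_true] at hlast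
      omega
    have hLlen : L.length = c.length := by
      rw [Composition.length, ← hmap, List.length_map]
    have hLlen' : L'.length = c'.length := by
      rw [Composition.length, ← hmap', List.length_map]
    -- L and L' are both decompositions of the same flatten
    have hE1 : ∀ d ∈ L.flatten, d ≠ 0 ∧ d ≤ 1 := by
      intro d hd
      obtain ⟨V, hV, hdV⟩ := List.mem_flatten.mp hd
      exact (hw V hV).1 d hdV
    obtain ⟨L₀, _, huniq⟩ := decomp_exists_unique c.length (by omega) L.flatten hE1
      (flatten_partial hw) (by rw [flatten_sum hw, hLlen])
    have e1 : L = L₀ := huniq L ⟨hw, hLlen, rfl⟩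
    have e2 : L' = L₀ := huniq L' ⟨hw', by omega, hfl.symm⟩
    have hLL : L = L' := e1.trans e2.symm
    subst hLL
    have : c = c' := Composition.ext (by rw [← hmap, ← hmap'])
    subst this
    rfl
  · -- surjective
    intro D hD
    obtain ⟨hlen, h1, h2, h3⟩ := mem_Fm.mp hD
    have hne : D ≠ [] := by
      intro h; rw [h] at hlen; simp at hlen; omega
    set E := D.dropLast with hEdef
    set d := D.getLast hne with hddef
    have hsplit : E ++ [d] = D := List.dropLast_append_getLast hne
    have hElen : E.length = n := by
      rw [hEdef, List.length_dropLast, hlen]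
    have hE1 : ∀ e ∈ E, e ≠ 0 ∧ e ≤ 1 :=
      fun e he => h1 e (List.dropLast_sublist D |>.subset he)
    have hE2 : ∀ k, 1 ≤ k → k ≤ E.length → 1 ≤ (E.take k).sum := by
      intro k hk1 hk2
      have : D.take k = E.take k := by
        conv_lhs => rw [← hsplit]
        exact List.take_append_of_le_length hk2
      rw [← this]
      exact h2 k hk1 (by omega)
    have hEsum : E.sum + d = 1 := by
      have : (E ++ [d]).sum = D.sum := by rw [hsplit]
      rw [List.sum_append] at this
      simp at this
      omega
    have hs1 : 1 ≤ E.sum := by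
      have := hE2 E.length (by omega) (le_refl _)
      rwa [List.take_of_length_le (le_refl _)] at this
    have hd0 : d ≠ 0 := (h1 d (List.getLast_mem hne)).1
    have hs2 : 2 ≤ E.sum := by
      rcases eq_or_lt_of_le hs1 with h | h
      · exfalso; apply hd0; omega
      · omega
    have hsle : E.sum ≤ (n : ℤ) := by
      have := sum_take_le E (fun e he => (hE1 e he).2) E.length
      rwa [List.take_of_length_le (le_refl _), hElen] at this
    set s := E.sum.toNat with hsdef
    have hscast : (s : ℤ) = E.sum := Int.toNat_of_nonneg (by omega)
    have hs2' : 2 ≤ s := by omega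
    obtain ⟨L, ⟨hLw, hLlen, hLfl⟩, _⟩ :=
      decomp_exists_unique s (by omega) E hE1 hE2 hscast.symm
    have hblocks_pos : ∀ i ∈ L.map List.length, 0 < i := by
      intro i hi
      obtain ⟨W, hW, rfl⟩ := List.mem_map.mp hi
      rcases Nat.eq_zero_or_pos W.length with h | h
      · exfalso
        have hWnil : W = [] := List.length_eq_zero_iff.mp h
        have := (hLw W hW).2.2
        rw [hWnil] at this
        simp at this
      · exact h
    have hblocks_sum : (L.map List.length).sum = n := by
      rw [← List.length_flatten, hLfl, hElen]
    refine ⟨⟨⟨L.map List.length, fun {i} hi => hblocks_pos i hi, hblocks_sum⟩, L⟩, ?_, ?_⟩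
    · simp only [Finset.mem_filter, Finset.mem_sigma, Finset.mem_univ, true_and]
      constructor
      · exact mem_G.mpr ⟨hLw, rfl⟩
      · show 2 ≤ (L.map List.length).length
        rw [List.length_map]; omega
    · show L.flatten ++ [1 - ((L.map List.length).length : ℤ)] = D
      rw [hLfl, List.length_map, hLlen, hscast]
      rw [show (1 : ℤ) - E.sum = d by omega]
      exact hsplit
  · -- values agree
    rintro ⟨c, L⟩ hx
    simp only [Finset.mem_filter, Finset.mem_sigma, Finset.mem_univ, true_and] at hx
    obtain ⟨hG, hlen2⟩ := hx
    obtain ⟨hw, hmap⟩ := mem_G.mp hG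
    show w c * (L.map fun W => (4:ℕ) ^ cnt W).prod
      = 4 ^ cnt (L.flatten ++ [1 - (c.length : ℤ)])
    rw [cnt_append, cnt_flatten, prod_map_pow, pow_add]
    have hsingle : ∀ x : ℤ, cnt [x] = if x ≤ -2 then 1 else 0 := by
      intro x
      by_cases h : x ≤ -2 <;> simp [cnt, h]
    by_cases h3 : 3 ≤ c.length
    · have hwc : w c = 4 := by
        simp only [w]; rw [if_neg (by omega), if_pos h3]
      have hc1 : cnt [1 - (c.length : ℤ)] = 1 := by
        rw [hsingle, if_pos]
        have : (3 : ℤ) ≤ (c.length : ℤ) := by exact_mod_cast h3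
        omega
      rw [hwc, hc1, pow_one]
      ring
    · have hc2 : c.length = 2 := by omega
      have hwc : w c = 1 := by simp only [w]; rw [if_pos hc2]
      have hc0 : cnt [1 - (c.length : ℤ)] = 0 := by
        rw [hsingle, if_neg]
        rw [hc2]; norm_num
      rw [hwc, hc0, pow_zero]
      ring
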